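/- If q is a rational number with 2q = a/b in lowest terms (a, b coprime integers, b ≠ 0), then 2·(2q² - 1) = (a² - 2b²)/b², and a² - 2b² is coprime to b². Consequently, if 2 cos α = a/b in lowest terms with b ≠ ±1, then the denominators (in lowest terms) of the sequence 2 cos(2ᵏ α), k = 0, 1, 2, ..., are strictly increasing in absolute value. -/

import Mathlib

lemma cop_step (a b : ℤ) (h : IsCoprime a b) :
    IsCoprime (a ^ 2 - 2 * b ^ 2) (b ^ 2) := by
  have h2 : IsCoprime (a ^ 2) (b ^ 2) := h.pow
  have : a ^ 2 - 2 * b ^ 2 = a ^ 2 + b ^ 2 * (-2) := by ring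
  rw [this]
  exact h2.add_mul_left_left (-2)

lemma int_cop_natAbs {a b : ℤ} (h : IsCoprime a b) :
    Nat.Coprime a.natAbs b.natAbs :=
  Int.isCoprime_iff_gcd_eq_one.mp h

lemma den_step (q : ℚ) : (q ^ 2 - 2).den = q.den ^ 2 := by
  have hd0 : ((q.den : ℚ)) ≠ 0 := by
    exact_mod_cast q.den_nz
  have h1 : q * (q.den : ℚ) = (q.num : ℚ) := by
    exact_mod_cast congrArg (fun x : ℚ => (x : ℚ)) (Rat.mul_den_eq_num q)
  have key : q ^ 2 - 2 = ((q.num ^ 2 - 2 * (q.den : ℤ) ^ 2 : ℤ) : ℚ) / (((q.den : ℤ) ^ 2 : ℤ) : ℚ) := by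
    push_cast
    rw [eq_div_iff (by positivity)]
    linear_combination (q * (q.den : ℚ) + (q.num : ℚ)) * h1
  have hcop : IsCoprime q.num (q.den : ℤ) := by
    rw [Int.isCoprime_iff_gcd_eq_one]
    exact_mod_cast q.reduced
  have hcop2 : IsCoprime (q.num ^ 2 - 2 * (q.den : ℤ) ^ 2) ((q.den : ℤ) ^ 2) :=
    cop_step _ _ hcop
  have hpos : (0 : ℤ) < (q.den : ℤ) ^ 2 := by positivity
  have h2 := Rat.den_div_eq_of_coprime hpos (int_cop_natAbs hcop2)
  rw [key] at *
  have : ((q.den ^ 2 : ℕ) : ℤ) = ((q.den : ℤ) ^ 2) := by push_cast; ring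
  omega

lemma den_of_div {a b : ℤ} (hb : b ≠ 0) (hcop : IsCoprime a b) :
    ((a : ℚ) / (b : ℚ)).den = b.natAbs := by
  rcases lt_or_gt_of_ne hb with hneg | hpos
  · have h : (a : ℚ) / (b : ℚ) = ((-a : ℤ) : ℚ) / ((-b : ℤ) : ℚ) := by
      push_cast; rw [div_neg, neg_div, neg_neg]
    have h2 := Rat.den_div_eq_of_coprime (a := -a) (b := -b) (by omega)
      (by simpa [Int.natAbs_neg] using int_cop_natAbs hcop)
    rw [h]
    omega
  · have h2 := Rat.den_div_eq_of_coprime hpos (int_cop_natAbs hcop)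
    omega

theorem doubling_denominators :
    (∀ (q : ℚ) (a b : ℤ), b ≠ 0 → IsCoprime a b → 2 * q = (a : ℚ) / (b : ℚ) →
      2 * (2 * q ^ 2 - 1) = ((a ^ 2 - 2 * b ^ 2 : ℤ) : ℚ) / ((b ^ 2 : ℤ) : ℚ) ∧
        IsCoprime (a ^ 2 - 2 * b ^ 2) (b ^ 2)) ∧
    (∀ (α : ℝ) (a b : ℤ), b ≠ 0 → b ≠ 1 → b ≠ -1 → IsCoprime a b →
      2 * Real.cos α = (a : ℝ) / (b : ℝ) →
      ∃ f : ℕ → ℚ, (∀ k : ℕ, (f k : ℝ) = 2 * Real.cos (2 ^ k * α)) ∧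
        StrictMono fun k => (f k).den) := by
  constructor
  · intro q a b hb hcop hq
    refine ⟨?_, cop_step a b hcop⟩
    have hb' : (b : ℚ) ≠ 0 := Int.cast_ne_zero.mpr hb
    have : 2 * (2 * q ^ 2 - 1) = (2 * q) ^ 2 - 2 := by ring
    rw [this, hq]
    push_cast
    field_simp
  · intro α a b hb hb1 hbm1 hcop hcos
    refine ⟨fun k => (fun x => x ^ 2 - 2)^[k] ((a : ℚ) / (b : ℚ)), ?_, ?_⟩
    · intro k
      induction k with
      | zero =>
        show (((a : ℚ) / (b : ℚ) : ℚ) : ℝ) = 2 * Real.cos (2 ^ 0 * α)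
        push_cast
        rw [pow_zero, one_mul, ← hcos]
      | succ k ih =>
        show (((fun x => x ^ 2 - 2)^[k + 1] ((a : ℚ) / (b : ℚ)) : ℚ) : ℝ) = _
        rw [Function.iterate_succ_apply']
        push_cast
        rw [show ((fun x : ℚ => x ^ 2 - 2)^[k] ((a : ℚ) / (b : ℚ)) : ℝ) =
          2 * Real.cos (2 ^ k * α) from ih]
        have h2 : (2 : ℝ) ^ (k + 1) * α = 2 * (2 ^ k * α) := by ring
        rw [h2, Real.cos_two_mul]
        ring
    · have hden0 : 1 < ((a : ℚ) / (b : ℚ)).den := by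
        rw [den_of_div hb hcop]
        omega
      have hall : ∀ k, 1 < ((fun x : ℚ => x ^ 2 - 2)^[k] ((a : ℚ) / (b : ℚ))).den := by
        intro k
        induction k with
        | zero => simpa using hden0
        | succ k ih =>
          rw [Function.iterate_succ_apply', den_step]
          nlinarith
      apply strictMono_nat_of_lt_succ
      intro k
      simp only [Function.iterate_succ_apply', den_step]
      have := hall k
      nlinarith
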